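/- For finite sets A, B, C contained in a common ambient type, each pairwise union nonempty, the Jaccard distance d(A,B) = 1 − |A ∩ B|/|A ∪ B| satisfies the triangle inequality: d(A,C) ≤ d(A,B) + d(B,C). -/
import Mathlib

open Finset

lemma jaccard_aux {α : Type*} [DecidableEq α] (X Y : Finset α) (h : (X ∪ Y).Nonempty) :
    1 - ((X ∩ Y).card : ℝ) / ((X ∪ Y).card : ℝ) =
      ((symmDiff X Y).card : ℝ) / ((X ∪ Y).card : ℝ) := by
  have hpos : (0:ℝ) < ((X ∪ Y).card : ℝ) := by exact_mod_cast Finset.card_pos.mpr h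
  have hdisj : Disjoint (X ∩ Y) (symmDiff X Y) := by
    rw [Finset.disjoint_left]
    intro a ha hb
    simp only [Finset.mem_inter] at ha
    simp only [Finset.mem_symmDiff] at hb
    tauto
  have hsum : (X ∩ Y).card + (symmDiff X Y).card = (X ∪ Y).card := by
    rw [← Finset.card_union_of_disjoint hdisj]
    congr 1
    ext a
    simp only [Finset.mem_union, Finset.mem_inter, Finset.mem_symmDiff]
    tauto
  field_simp
  have : ((X ∩ Y).card : ℝ) + ((symmDiff X Y).card : ℝ) = ((X ∪ Y).card : ℝ) := by
    exact_mod_cast hsum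
  linarith

/-- The Jaccard distance `d(A,B) = 1 - |A ∩ B|/|A ∪ B|` satisfies the triangle
inequality. -/
theorem jaccard_distance_triangle {α : Type*} [DecidableEq α]
    (A B C : Finset α)
    (hAB : (A ∪ B).Nonempty) (hBC : (B ∪ C).Nonempty) (hAC : (A ∪ C).Nonempty) :
    1 - ((A ∩ C).card : ℝ) / ((A ∪ C).card : ℝ) ≤
      (1 - ((A ∩ B).card : ℝ) / ((A ∪ B).card : ℝ)) +
      (1 - ((B ∩ C).card : ℝ) / ((B ∪ C).card : ℝ)) := by
  rw [jaccard_aux A C hAC, jaccard_aux A B hAB, jaccard_aux B C hBC]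
  -- key combinatorial inequality
  have h1 : symmDiff A C ⊆ (symmDiff A B) ∪ (symmDiff B C) := by
    intro x hx
    simp only [Finset.mem_symmDiff, Finset.mem_union] at *
    tauto
  have h2 : B \ (A ∪ C) ⊆ (symmDiff A B) ∩ (symmDiff B C) := by
    intro x hx
    simp only [Finset.mem_sdiff, Finset.mem_union, Finset.mem_inter,
      Finset.mem_symmDiff] at *
    tauto
  have hcard : (symmDiff A C).card + (B \ (A ∪ C)).card ≤
      (symmDiff A B).card + (symmDiff B C).card := by
    calc (symmDiff A C).card + (B \ (A ∪ C)).card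
        ≤ ((symmDiff A B) ∪ (symmDiff B C)).card +
          ((symmDiff A B) ∩ (symmDiff B C)).card :=
          add_le_add (Finset.card_le_card h1) (Finset.card_le_card h2)
      _ = (symmDiff A B).card + (symmDiff B C).card :=
          Finset.card_union_add_card_inter _ _
  -- ambient union
  have hu : (A ∪ C).card + (B \ (A ∪ C)).card = (A ∪ B ∪ C).card := by
    rw [← Finset.card_union_of_disjoint Finset.disjoint_sdiff]
    congr 1
    ext a
    simp only [Finset.mem_union, Finset.mem_sdiff]
    tauto
  have hACu : (A ∪ C) ⊆ A ∪ B ∪ C := by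
    intro a ha; simp only [Finset.mem_union] at *; tauto
  have hABu : (A ∪ B) ⊆ A ∪ B ∪ C := by
    intro a ha; simp only [Finset.mem_union] at *; tauto
  have hBCu : (B ∪ C) ⊆ A ∪ B ∪ C := by
    intro a ha; simp only [Finset.mem_union] at *; tauto
  have hupos : (0:ℝ) < ((A ∪ B ∪ C).card : ℝ) := by
    exact_mod_cast Finset.card_pos.mpr (hAC.mono hACu)
  have hACpos : (0:ℝ) < ((A ∪ C).card : ℝ) := by
    exact_mod_cast Finset.card_pos.mpr hAC
  have hABpos : (0:ℝ) < ((A ∪ B).card : ℝ) := by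
    exact_mod_cast Finset.card_pos.mpr hAB
  have hBCpos : (0:ℝ) < ((B ∪ C).card : ℝ) := by
    exact_mod_cast Finset.card_pos.mpr hBC
  have hs3 : (symmDiff A C).card ≤ (A ∪ C).card := by
    apply Finset.card_le_card
    intro x hx
    simp only [Finset.mem_symmDiff, Finset.mem_union] at *
    tauto
  have step1 : ((symmDiff A C).card : ℝ) / ((A ∪ C).card : ℝ) ≤
      (((symmDiff A C).card : ℝ) + ((B \ (A ∪ C)).card : ℝ)) / ((A ∪ B ∪ C).card : ℝ) := by
    rw [div_le_div_iff₀ hACpos hupos]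
    have huq : ((A ∪ C).card : ℝ) + ((B \ (A ∪ C)).card : ℝ) = ((A ∪ B ∪ C).card : ℝ) := by
      exact_mod_cast hu
    have hs3' : ((symmDiff A C).card : ℝ) ≤ ((A ∪ C).card : ℝ) := by exact_mod_cast hs3
    have hx : (0:ℝ) ≤ ((B \ (A ∪ C)).card : ℝ) := by positivity
    nlinarith
  have step2 : (((symmDiff A C).card : ℝ) + ((B \ (A ∪ C)).card : ℝ)) / ((A ∪ B ∪ C).card : ℝ) ≤
      (((symmDiff A B).card : ℝ) + ((symmDiff B C).card : ℝ)) / ((A ∪ B ∪ C).card : ℝ) := by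
    apply div_le_div_of_nonneg_right ?_ hupos.le
    exact_mod_cast hcard
  have step3 : ((symmDiff A B).card : ℝ) / ((A ∪ B ∪ C).card : ℝ) ≤
      ((symmDiff A B).card : ℝ) / ((A ∪ B).card : ℝ) := by
    gcongr
  have step4 : ((symmDiff B C).card : ℝ) / ((A ∪ B ∪ C).card : ℝ) ≤
      ((symmDiff B C).card : ℝ) / ((B ∪ C).card : ℝ) := by
    gcongr
  have : (((symmDiff A B).card : ℝ) + ((symmDiff B C).card : ℝ)) / ((A ∪ B ∪ C).card : ℝ) =
      ((symmDiff A B).card : ℝ) / ((A ∪ B ∪ C).card : ℝ) + ((symmDiff B C).card : ℝ) / ((A ∪ B ∪ C).card : ℝ) := by ring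
  linarith [step1, step2, step3, step4, this.le, this.ge]
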